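/- Let G be a finite group acting on a finite set S and f : S → S a G-equivariant map. For each subgroup H ≤ G let f_H denote the induced map on S/H and Per(S/H, f_H) its set of periodic points. If integers (n_H) satisfy that Σ_H n_H ε_H ∈ Q[G] is annihilated by every rational character of G, then Σ_{H ≤ G} n_H · |Per(S/H, f_H)| = 0. -/

import Mathlib

open scoped Classical

set_option maxHeartbeats 1000000

section WaltonAux

variable {G S : Type} [Group G] [MulAction G S]

lemma walton_iterate_smul (f : S → S) (hf : ∀ (g : G) (x : S), f (g • x) = g • f x)
    (g : G) (n : ℕ) (x : S) : f^[n] (g • x) = g • f^[n] x := by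
  induction n with
  | zero => rfl
  | succ n ih => rw [Function.iterate_succ_apply', ih, Function.iterate_succ_apply', hf]

lemma walton_smul_mem_periodicPts (f : S → S)
    (hf : ∀ (g : G) (x : S), f (g • x) = g • f x) (g : G) {x : S}
    (hx : x ∈ Function.periodicPts f) : g • x ∈ Function.periodicPts f := by
  obtain ⟨n, hn, hxn⟩ := Function.mem_periodicPts.1 hx
  exact Function.mk_mem_periodicPts hn (by
    show f^[n] (g • x) = g • x
    rw [walton_iterate_smul f hf, hxn])

lemma walton_exists_iterate_mem_periodicPts [Finite S] (f : S → S) (x : S) :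
    ∃ a : ℕ, ∀ m ≥ a, f^[m] x ∈ Function.periodicPts f := by
  obtain ⟨a, b, hab, h⟩ := Finite.exists_ne_map_eq_of_infinite (fun n : ℕ => f^[n] x)
  wlog hlt : a < b generalizing a b
  · exact this b a (Ne.symm hab) h.symm (by omega)
  have hper : f^[a] x ∈ Function.periodicPts f := by
    refine Function.mk_mem_periodicPts (n := b - a) (by omega) ?_
    show f^[b-a] (f^[a] x) = f^[a] x
    rw [← Function.iterate_add_apply, show b - a + a = b by omega]
    exact h.symm
  refine ⟨a, fun m hm => ?_⟩
  have : f^[m] x = f^[m - a] (f^[a] x) := by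
    rw [← Function.iterate_add_apply, show m - a + a = m by omega]
  rw [this]
  exact (Function.bijOn_periodicPts (f := f)).mapsTo.iterate (m - a) hper

end WaltonAux

lemma walton_trace_ofMulAction {G X : Type} [Group G] [Finite X] [MulAction G X] (g : G) :
    LinearMap.trace ℚ (MonoidAlgebra ℚ X) ((Representation.ofMulAction ℚ G X) g)
      = Nat.card (MulAction.fixedBy X g) := by
  cases nonempty_fintype X
  classical
  rw [Nat.card_eq_fintype_card]
  rw [LinearMap.trace_eq_matrix_trace ℚ ((MonoidAlgebra.basis X ℚ)), Matrix.trace]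
  have hdiag : ∀ x : X,
      Matrix.diag ((LinearMap.toMatrix (MonoidAlgebra.basis X ℚ) (MonoidAlgebra.basis X ℚ))
        ((Representation.ofMulAction ℚ G X) g)) x = if g • x = x then (1:ℚ) else 0 := by
    intro x
    rw [Matrix.diag_apply, LinearMap.toMatrix_apply]
    simp [Representation.ofMulAction_single, Finsupp.single_apply]
    exact Finsupp.single_apply
  rw [Finset.sum_congr rfl (fun x _ => hdiag x), Finset.sum_boole, Fintype.card_subtype]
  norm_num

/-- Walton's idempotent relation for periodic points (Theorem B, for finite
`G`-sets): if `Σ_H n_H ε_H ∈ ℚ[G]` is annihilated by every rational character of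
`G`, then `Σ_H n_H |Per(S/H, f_H)| = 0`, where `f_H` is the map induced by the
`G`-equivariant map `f` on the quotient `S/H`. -/
theorem walton_periodic_point_count {G S : Type} [Group G] [Fintype G]
    [Fintype S] [MulAction G S]
    (f : S → S) (hf : ∀ (g : G) (x : S), f (g • x) = g • f x)
    (fbar : ∀ H : Subgroup G,
      Quotient (MulAction.orbitRel H S) → Quotient (MulAction.orbitRel H S))
    (hfbar : ∀ H : Subgroup G, fbar H ∘ Quotient.mk (MulAction.orbitRel H S) =
      Quotient.mk (MulAction.orbitRel H S) ∘ f)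
    (n : Subgroup G → ℤ) (u : MonoidAlgebra ℚ G)
    (hu : u = ∑ H : Subgroup G,
        (n H : ℚ) • ((Nat.card H : ℚ)⁻¹ • ∑ h : H, MonoidAlgebra.of ℚ G (h : G)))
    (hann : ∀ (V : Type) [AddCommGroup V] [Module ℚ V] [FiniteDimensional ℚ V]
        (ρ : Representation ℚ G V), LinearMap.trace ℚ V (ρ.asAlgebraHom u) = 0) :
    ∑ H : Subgroup G, n H *
        (Nat.card {Q : Quotient (MulAction.orbitRel H S) //
          ∃ k ≥ 1, (fbar H)^[k] Q = Q} : ℤ) = 0 := by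
  classical
  set P : Set S := Function.periodicPts f with hPdef
  letI : MulAction G P :=
    { smul := fun g x => ⟨g • (x : S), walton_smul_mem_periodicPts f hf g x.2⟩
      one_smul := fun x => Subtype.ext (one_smul G (x : S))
      mul_smul := fun g g' x => Subtype.ext (mul_smul g g' (x : S)) }
  have hsmul_val : ∀ (g : G) (x : P), ((g • x : P) : S) = g • (x : S) := fun _ _ => rfl
  -- induced map on quotients on points
  have hbar : ∀ (H : Subgroup G) (k : ℕ) (x : S),
      (fbar H)^[k] (Quotient.mk (MulAction.orbitRel H S) x)
        = Quotient.mk (MulAction.orbitRel H S) (f^[k] x) := by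
    intro H k
    induction k with
    | zero => intro x; rfl
    | succ k ih =>
      intro x
      rw [Function.iterate_succ_apply', ih, Function.iterate_succ_apply']
      exact congrFun (hfbar H) (f^[k] x)
  -- key cardinality identity: Per(S/H) ≃ P/H
  have key : ∀ H : Subgroup G,
      Nat.card {Q : Quotient (MulAction.orbitRel H S) // ∃ k ≥ 1, (fbar H)^[k] Q = Q}
        = Nat.card (Quotient (MulAction.orbitRel H P)) := by
    intro H
    refine (Nat.card_congr (Equiv.ofBijective ?_ ⟨?_, ?_⟩)).symm
    · -- the map P/H → Per(S/H)
      refine Quotient.lift (fun x : P =>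
        (⟨Quotient.mk (MulAction.orbitRel H S) (x : S), ?_⟩ :
          {Q : Quotient (MulAction.orbitRel H S) // ∃ k ≥ 1, (fbar H)^[k] Q = Q})) ?_
      · obtain ⟨m, hm, hxm⟩ := Function.mem_periodicPts.1 x.2
        exact ⟨m, hm, by rw [hbar H m, hxm]⟩
      · intro x y hxy
        obtain ⟨h, hh⟩ := MulAction.mem_orbit_iff.1 hxy
        refine Subtype.ext (Quotient.sound ?_)
        exact MulAction.mem_orbit_iff.2 ⟨h, by rw [← hh]; rfl⟩
    · -- injective
      rintro ⟨x⟩ ⟨y⟩ hxy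
      have hxy' : Quotient.mk (MulAction.orbitRel H S) (x : S)
          = Quotient.mk (MulAction.orbitRel H S) (y : S) := congrArg Subtype.val hxy
      obtain ⟨h, hh⟩ := MulAction.mem_orbit_iff.1 (Quotient.exact hxy')
      exact Quotient.sound (MulAction.mem_orbit_iff.2 ⟨h, Subtype.ext hh⟩)
    · -- surjective
      rintro ⟨Q, k, hk, hQ⟩
      obtain ⟨x⟩ := Q
      have hQ' : Function.IsPeriodicPt (fbar H) k
          (Quotient.mk (MulAction.orbitRel H S) x) := hQ
      obtain ⟨a, ha⟩ := walton_exists_iterate_mem_periodicPts f x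
      have hge : k * a ≥ a := Nat.le_mul_of_pos_left a (by omega)
      have hy : f^[k * a] x ∈ P := ha (k * a) hge
      refine ⟨Quotient.mk (MulAction.orbitRel H P) ⟨f^[k * a] x, hy⟩, ?_⟩
      refine Subtype.ext ?_
      show Quotient.mk (MulAction.orbitRel H S) (f^[k * a] x)
          = Quotient.mk (MulAction.orbitRel H S) x
      rw [← hbar H (k * a) x]
      exact hQ'.mul_const a
  -- Burnside
  have hset : ∀ (H : Subgroup G) (h : H),
      MulAction.fixedBy P ((h : G)) = MulAction.fixedBy P h := by
    intro H h
    ext x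
    simp only [MulAction.mem_fixedBy]
    rw [Subgroup.smul_def]
  have burnside : ∀ H : Subgroup G,
      (∑ h : H, Nat.card (MulAction.fixedBy P ((h : G))))
        = Nat.card (Quotient (MulAction.orbitRel H P)) * Nat.card H := by
    intro H
    have hmb := MulAction.sum_card_fixedBy_eq_card_orbits_mul_card_group H P
    calc (∑ h : H, Nat.card (MulAction.fixedBy P ((h : G))))
        = ∑ h : H, Fintype.card (MulAction.fixedBy P h) := by
          refine Finset.sum_congr rfl fun h _ => ?_
          rw [hset H h, Nat.card_eq_fintype_card]
      _ = Fintype.card (Quotient (MulAction.orbitRel H P)) * Fintype.card H := hmb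
      _ = Nat.card (Quotient (MulAction.orbitRel H P)) * Nat.card H := by
          rw [Nat.card_eq_fintype_card, Nat.card_eq_fintype_card]
  -- the representation
  set ρ : Representation ℚ G (MonoidAlgebra ℚ P) := Representation.ofMulAction ℚ G P with hρ
  have h0 := hann (MonoidAlgebra ℚ P) ρ
  rw [hu, map_sum, map_sum] at h0
  have h1 : ∀ H : Subgroup G,
      LinearMap.trace ℚ (MonoidAlgebra ℚ P) (ρ.asAlgebraHom
        ((n H : ℚ) • ((Nat.card H : ℚ)⁻¹ • ∑ h : H, MonoidAlgebra.of ℚ G (h : G))))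
        = (n H : ℚ) * (Nat.card (Quotient (MulAction.orbitRel H P)) : ℚ) := by
    intro H
    simp only [map_smul, map_sum]
    have h2 : ∀ h : H, LinearMap.trace ℚ (MonoidAlgebra ℚ P) (ρ.asAlgebraHom
        (MonoidAlgebra.of ℚ G (h : G))) = (Nat.card (MulAction.fixedBy P ((h : G))) : ℚ) := by
      intro h
      rw [MonoidAlgebra.of_apply, Representation.asAlgebraHom_single_one]
      exact walton_trace_ofMulAction (h : G)
    rw [Finset.sum_congr rfl (fun h _ => h2 h), ← Nat.cast_sum, burnside H]
    have hne : (Nat.card H : ℚ) ≠ 0 := by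
      rw [Nat.card_eq_fintype_card]
      exact Nat.cast_ne_zero.2 Fintype.card_ne_zero
    rw [smul_eq_mul, smul_eq_mul, Nat.cast_mul]
    field_simp
  rw [Finset.sum_congr rfl (fun H _ => h1 H)] at h0
  -- conclude
  have : ((∑ H : Subgroup G, n H *
      (Nat.card {Q : Quotient (MulAction.orbitRel H S) //
        ∃ k ≥ 1, (fbar H)^[k] Q = Q} : ℤ) : ℤ) : ℚ) = 0 := by
    push_cast
    rw [← h0]
    refine Finset.sum_congr rfl fun H _ => ?_
    rw [key H]
  exact_mod_cast this
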